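/- Let n, m ≥ 1, let θ_1 < ... < θ_m be distinct real numbers, and let f_{ij} (1 ≤ i ≤ n, 1 ≤ j ≤ m) be nonnegative real numbers such that there exists an index j_0 with f_{i j_0} > 0 for all i = 1,...,n. For a PMF π on {1,...,m} define the loss ℓ(π) = −(1/n) Σ_{i=1}^n log( Σ_{j=1}^m f_{ij} π_j ). Let F be a set of PMFs on {1,...,m} and suppose π̂ ∈ F is a global minimizer of ℓ over F (ℓ(π̂) ≤ ℓ(π) for all π ∈ F) satisfying Σ_{j=1}^m f_{ij} π̂_j > 0 for every i. Then for every ε > 0 there exists a one-hidden-layer ReLU network v : ℝ → ℝ such that the PMF g defined by g_j = exp(v(θ_j)) / Σ_{k=1}^m exp(v(θ_k)) satisfies |ℓ(g) − ℓ(π̂)| < ε. -/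

import Mathlib

open Finset

/-- `v : ℝ → ℝ` is a one-hidden-layer ReLU network: there exist `H ∈ ℕ` and
parameters `c, w, b ∈ ℝ^H`, `d ∈ ℝ` with `v θ = d + ∑ k, c k * max 0 (w k * θ + b k)`. -/
def IsOneHiddenLayerReLUNet (v : ℝ → ℝ) : Prop :=
  ∃ (H : ℕ) (c w b : Fin H → ℝ) (d : ℝ),
    ∀ t : ℝ, v t = d + ∑ k, c k * max 0 (w k * t + b k)

/-- The mixture log-likelihood loss `ℓ(π) = −(1/n) Σ_i log( Σ_j f i j * π j )`. -/
noncomputable def mixLoss {n m : ℕ} (f : Fin n → Fin m → ℝ) (π : Fin m → ℝ) : ℝ :=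
  -(1 / (n : ℝ)) * ∑ i, Real.log (∑ j, f i j * π j)

lemma continuousAt_fin_sum {ι : Type*} (s : Finset ι) (g : ι → ℝ → ℝ) (x : ℝ)
    (h : ∀ i ∈ s, ContinuousAt (g i) x) :
    ContinuousAt (fun t => ∑ i ∈ s, g i t) x := by
  induction s using Finset.cons_induction with
  | empty => simpa using continuousAt_const
  | cons a s ha ih =>
      simp only [Finset.sum_cons]
      exact (h a (Finset.mem_cons_self _ _)).add
        (ih fun i hi => h i (Finset.mem_cons_of_mem hi))

lemma relu_const (d : ℝ) : IsOneHiddenLayerReLUNet (fun _ => d) :=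
  ⟨0, fun i => 0, fun i => 0, fun i => 0, d, fun t => by simp⟩

lemma relu_add_unit {v : ℝ → ℝ} (hv : IsOneHiddenLayerReLUNet v) (c M : ℝ) :
    IsOneHiddenLayerReLUNet (fun t => v t + c * max 0 (t - M)) := by
  obtain ⟨H, cs, ws, bs, d, hvd⟩ := hv
  refine ⟨H + 1, Fin.snoc cs c, Fin.snoc ws 1, Fin.snoc bs (-M), d, fun t => ?_⟩
  rw [Fin.sum_univ_castSucc]
  simp only [Fin.snoc_castSucc, Fin.snoc_last, one_mul, ← sub_eq_add_neg]
  rw [hvd t]; ring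

lemma relu_interpolate (s : Finset ℝ) (y : ℝ → ℝ) :
    ∃ v : ℝ → ℝ, IsOneHiddenLayerReLUNet v ∧ ∀ x ∈ s, v x = y x := by
  induction s using Finset.induction_on_max with
  | empty => exact ⟨fun _ => 0, relu_const 0, by simp⟩
  | insert a s ha ih =>
      rcases s.eq_empty_or_nonempty with rfl | hs
      · exact ⟨fun _ => y a, relu_const (y a), by simp⟩
      · obtain ⟨v, hv, hvy⟩ := ih
        set M := s.max' hs with hM
        have hMa : M < a := ha M (s.max'_mem hs)
        have hMa' : a - M ≠ 0 := sub_ne_zero.mpr (ne_of_gt hMa)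
        refine ⟨fun t => v t + (y a - v a) / (a - M) * max 0 (t - M),
          relu_add_unit hv _ _, fun x hx => ?_⟩
        beta_reduce
        rcases Finset.mem_insert.mp hx with rfl | hxs
        · rw [max_eq_right (le_of_lt (sub_pos.mpr hMa)), div_mul_cancel₀ _ hMa']
          ring
        · rw [max_eq_left (sub_nonpos.mpr (s.le_max' x hxs)), mul_zero, add_zero]
          exact hvy x hxs

/-- Theorem 2 of the paper: a softmax-of-ReLU-network PMF (neural-g) can approximate
the loss value achieved by a global minimizer of the mixture log-likelihood loss over
an arbitrary family `F` of PMFs. -/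
theorem neural_g_approximates_global_min_loss
    (n m : ℕ) (hn : 1 ≤ n) (hm : 1 ≤ m)
    (θ : Fin m → ℝ) (hθ : StrictMono θ)
    (f : Fin n → Fin m → ℝ) (hf0 : ∀ i j, 0 ≤ f i j)
    (hfpos : ∃ j0 : Fin m, ∀ i : Fin n, 0 < f i j0)
    (F : Set (Fin m → ℝ))
    (hF : ∀ π ∈ F, (∀ j, 0 ≤ π j) ∧ ∑ j, π j = 1)
    (πhat : Fin m → ℝ) (hπhatF : πhat ∈ F)
    (hmin : ∀ π ∈ F, mixLoss f πhat ≤ mixLoss f π)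
    (hπhatpos : ∀ i : Fin n, 0 < ∑ j, f i j * πhat j)
    (ε : ℝ) (hε : 0 < ε) :
    ∃ v : ℝ → ℝ, IsOneHiddenLayerReLUNet v ∧
      |mixLoss f
          (fun j => Real.exp (v (θ j)) / (∑ k : Fin m, Real.exp (v (θ k)))) -
        mixLoss f πhat| < ε := by
  have hm0 : (0:ℝ) < m := by exact_mod_cast hm
  obtain ⟨hπhat0, hπhat1⟩ := hF πhat hπhatF
  -- perturbed PMF family
  set πd : ℝ → Fin m → ℝ := fun δ j => (1 - δ) * πhat j + δ / m with hπd
  have hπd0 : πd 0 = πhat := by funext j; simp [hπd]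
  -- continuity of the loss along the perturbation at δ = 0
  have hca : ContinuousAt (fun δ => mixLoss f (πd δ)) 0 := by
    apply ContinuousAt.mul continuousAt_const
    apply continuousAt_fin_sum
    intro i _
    apply ContinuousAt.comp (g := Real.log)
    · apply Real.continuousAt_log
      rw [hπd0]
      exact ne_of_gt (hπhatpos i)
    · apply continuousAt_fin_sum
      intro j _
      fun_prop
  have htend : Filter.Tendsto (fun δ => mixLoss f (πd δ)) (nhdsWithin 0 (Set.Ioi 0))
      (nhds (mixLoss f πhat)) := by
    rw [← hπd0]
    exact hca.continuousWithinAt.tendsto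
  have hev : ∀ᶠ δ in nhdsWithin 0 (Set.Ioi 0),
      |mixLoss f (πd δ) - mixLoss f πhat| < ε := by
    have := Metric.tendsto_nhds.mp htend ε hε
    filter_upwards [this] with δ hδ
    rwa [Real.dist_eq] at hδ
  have hev2 : ∀ᶠ δ in nhdsWithin 0 (Set.Ioi 0), δ ∈ Set.Ioo (0:ℝ) 1 :=
    Filter.eventually_of_mem (Ioo_mem_nhdsGT_of_mem ⟨le_refl 0, one_pos⟩) fun x hx => hx
  obtain ⟨δ, hδI, hδε⟩ := (hev2.and hev).exists
  obtain ⟨hδ0, hδ1⟩ := hδI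
  -- the perturbed PMF is strictly positive and sums to 1
  set π : Fin m → ℝ := πd δ with hπdef
  have hπpos : ∀ j, 0 < π j := fun j =>
    add_pos_of_nonneg_of_pos (mul_nonneg (by linarith) (hπhat0 j)) (div_pos hδ0 hm0)
  have hπsum : ∑ j, π j = 1 := by
    simp only [hπdef, hπd, Finset.sum_add_distrib, ← Finset.mul_sum, hπhat1,
      Finset.sum_const, Finset.card_univ, Fintype.card_fin, nsmul_eq_mul]
    rw [mul_div_cancel₀ _ (ne_of_gt hm0)]; ring
  -- interpolating ReLU net realizing log π at the grid points
  haveI : Nonempty (Fin m) := ⟨⟨0, hm⟩⟩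
  obtain ⟨v, hvnet, hvy⟩ := relu_interpolate (Finset.image θ Finset.univ)
    (fun x => Real.log (π (Function.invFun θ x)))
  have hvθ : ∀ j, v (θ j) = Real.log (π j) := by
    intro j
    rw [hvy (θ j) (Finset.mem_image_of_mem θ (Finset.mem_univ j)),
      Function.leftInverse_invFun hθ.injective j]
  have hexp : ∀ j, Real.exp (v (θ j)) = π j := fun j => by
    rw [hvθ j, Real.exp_log (hπpos j)]
  have hsm : (fun j => Real.exp (v (θ j)) / (∑ k : Fin m, Real.exp (v (θ k)))) = π := by
    funext j
    simp only [hexp]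
    rw [hπsum, div_one]
  exact ⟨v, hvnet, by rw [hsm]; exact hδε⟩
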